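/- For the Cressie-Read function f_k(t) = (t^k − k t + k − 1)/(k(k−1)) with k ∈ (1, ∞) (and f_k(t) = +∞ for t < 0), the Fenchel conjugate is f_k*(s) = (1/k)[((k−1)s + 1)₊^{k/(k−1)} − 1]. -/

import Mathlib

lemma cr_core (k : ℝ) (hk : 1 < k) (a t : ℝ) (ht : 0 ≤ t) :
    k * a * t ≤ t ^ k + (k - 1) * max a 0 ^ (k / (k - 1)) := by
  have hk0 : (0:ℝ) < k := lt_trans one_pos hk
  have hk1 : (0:ℝ) < k - 1 := by linarith
  have hq : (0:ℝ) < k / (k - 1) := div_pos hk0 hk1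
  rcases le_or_gt a 0 with ha | ha
  · have h1 : max a 0 = 0 := max_eq_right ha
    rw [h1, Real.zero_rpow hq.ne']
    have : k * a * t ≤ 0 := mul_nonpos_of_nonpos_of_nonneg (by nlinarith) ht
    have ht2 : 0 ≤ t ^ k := Real.rpow_nonneg ht k
    nlinarith
  · have h1 : max a 0 = a := max_eq_left ha.le
    rw [h1]
    have hconj : k.HolderConjugate (k / (k - 1)) := Real.HolderConjugate.conjExponent hk
    have := Real.young_inequality_of_nonneg ht ha.le hconj
    -- this : t * a ≤ t ^ k / k + a ^ (k/(k-1)) / (k/(k-1))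
    have hdiv : a ^ (k / (k - 1)) / (k / (k - 1)) = (k - 1) / k * a ^ (k / (k - 1)) := by
      field_simp
    rw [hdiv] at this
    have := mul_le_mul_of_nonneg_left this hk0.le
    calc k * a * t = k * (t * a) := by ring
      _ ≤ k * (t ^ k / k + (k - 1) / k * a ^ (k / (k - 1))) := this
      _ = t ^ k + (k - 1) * a ^ (k / (k - 1)) := by field_simp

/-- The Fenchel conjugate of the Cressie-Read function
f_k(t) = (t^k − k t + k − 1)/(k(k−1)) (with f_k = +∞ for t < 0, so the
supremum defining the conjugate is over t ≥ 0) is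
f_k*(s) = (1/k)[((k−1)s + 1)₊^{k/(k−1)} − 1]. -/
theorem cressie_read_conjugate (k : ℝ) (hk : 1 < k) (s : ℝ) :
    IsLUB {y : ℝ | ∃ t : ℝ, 0 ≤ t ∧
        y = s * t - (t ^ k - k * t + k - 1) / (k * (k - 1))}
      ((1 / k) * (max ((k - 1) * s + 1) 0 ^ (k / (k - 1)) - 1)) := by
  have hk0 : (0:ℝ) < k := lt_trans one_pos hk
  have hk1 : (0:ℝ) < k - 1 := by linarith
  have hkk : (0:ℝ) < k * (k - 1) := mul_pos hk0 hk1
  set a := (k - 1) * s + 1 with ha_def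
  set M := max a 0 ^ (k / (k - 1)) with hM_def
  apply IsGreatest.isLUB
  constructor
  · -- membership: the sup is attained
    rcases le_or_gt a 0 with ha | ha
    · refine ⟨0, le_refl 0, ?_⟩
      have h0 : (0:ℝ) ^ k = 0 := Real.zero_rpow hk0.ne'
      have hmax : max a 0 = 0 := max_eq_right ha
      have hq : (0:ℝ) < k / (k - 1) := div_pos hk0 hk1
      rw [hM_def, hmax, Real.zero_rpow hq.ne', h0]
      field_simp
      ring
    · set T := a ^ (1 / (k - 1)) with hT_def
      have hT0 : 0 ≤ T := Real.rpow_nonneg ha.le _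
      refine ⟨T, hT0, ?_⟩
      have hmax : max a 0 = a := max_eq_left ha.le
      have hexp : 1 / (k - 1) * k = 1 + 1 / (k - 1) := by field_simp; ring
      have hTk : T ^ k = a * T := by
        rw [hT_def, ← Real.rpow_mul ha.le, hexp, Real.rpow_add ha, Real.rpow_one]
      have hMa : M = a * T := by
        have : k / (k - 1) = 1 + 1 / (k - 1) := by field_simp; ring
        rw [hM_def, hmax, this, Real.rpow_add ha, Real.rpow_one, hT_def]
      have hs : s = (a - 1) / (k - 1) := by rw [ha_def]; field_simp; ring
      rw [hTk, hMa, hs]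
      field_simp
      ring
  · -- upper bound
    rintro y ⟨t, ht, rfl⟩
    have core := cr_core k hk a t ht
    have h1 : s * t - (t ^ k - k * t + k - 1) / (k * (k - 1))
        = (k * (k - 1) * s * t - t ^ k + k * t - k + 1) / (k * (k - 1)) := by
      field_simp
      ring
    have h2 : (1 / k) * (M - 1) = ((k - 1) * M - (k - 1)) / (k * (k - 1)) := by
      field_simp
    rw [h1, h2, div_le_div_iff_of_pos_right hkk]
    nlinarith [core]
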